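/- Let n ≥ 10, let C > 0, and for x, z ∈ ℝ and y ∈ ℝⁿ define h(x,z;y) = -(1/2)·Σ_{i=1}^{n-1}(y_i - y_{i+1})² - (1/(2n²))·‖y‖₂² + √(C/n)·(x·y₁ - (1/2)·z·y_n). Then the supremum over y ∈ ℝⁿ is attained and equals h_m(x,z) = C·( (a₁/2)·x² - (1/2)·a₂·x·z + (a₁/8)·z² ), where a₁ = B_{1,1}/n and a₂ = B_{n,1}/n with B = ((1/n²)·I_n + A)^{-1}; moreover 0.1 ≤ a₁ ≤ 20 and 0.1 ≤ a₂ ≤ 20. -/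

import Mathlib

open Matrix

/-- The `n × n` tridiagonal matrix with `A 1 1 = A n n = 1`, diagonal `2` otherwise,
off-diagonal entries `-1`, and all other entries `0` (0-indexed in Lean). -/
noncomputable def triA (n : ℕ) : Matrix (Fin n) (Fin n) ℝ :=
  Matrix.of fun i j =>
    if i = j then (if (i : ℕ) = 0 ∨ (i : ℕ) = n - 1 then 1 else 2)
    else if (i : ℕ) + 1 = (j : ℕ) ∨ (j : ℕ) + 1 = (i : ℕ) then -1 else 0

/-- `B = (α I + A)⁻¹`. -/
noncomputable def Bmat (n : ℕ) (α : ℝ) : Matrix (Fin n) (Fin n) ℝ :=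
  (α • (1 : Matrix (Fin n) (Fin n) ℝ) + triA n)⁻¹

/-- `h(x, z; y) = -(1/2)·Σ_{i=1}^{n-1} (yᵢ - yᵢ₊₁)² - (1/(2n²))·‖y‖₂²
    + √(C/n)·(x y₁ - (1/2) z yₙ)`. -/
noncomputable def hfun (n : ℕ) (hn : 0 < n) (C x z : ℝ) (y : Fin n → ℝ) : ℝ :=
  -(1 / 2) * (∑ i : Fin n, if h : (i : ℕ) + 1 < n then (y i - y ⟨(i : ℕ) + 1, h⟩) ^ 2 else 0)
    - (1 / (2 * (n : ℝ) ^ 2)) * ∑ i : Fin n, (y i) ^ 2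
    + Real.sqrt (C / n) * (x * y ⟨0, hn⟩ - (1 / 2) * z * y ⟨n - 1, by omega⟩)

open Finset

def g0 (n : ℕ) (y : Fin n → ℝ) : ℕ → ℝ := fun k => if h : k < n then y ⟨k, h⟩ else 0

noncomputable def Dsum (n : ℕ) (y : Fin n → ℝ) : ℝ :=
  ∑ i : Fin n, if h : (i:ℕ)+1 < n then (y i - y ⟨(i:ℕ)+1, h⟩)^2 else 0

-- generic: sum over range n of guarded F = sum over range (n-1)
lemma range_adj_sum (n : ℕ) (F : ℕ → ℝ) :
    (∑ k ∈ range n, if k+1 < n then F k else 0) = ∑ k ∈ range (n-1), F k := by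
  symm
  apply Finset.sum_subset_zero_on_sdiff
  · exact Finset.range_subset_range.2 (Nat.sub_le n 1)
  · intro k hk
    simp only [Finset.mem_sdiff, Finset.mem_range] at hk
    rw [if_neg (by omega)]
  · intro k hk
    simp only [Finset.mem_range] at hk
    rw [if_pos (by omega)]

lemma fin_adj_sum (n : ℕ) (y : Fin n → ℝ) (F : ℝ → ℝ → ℝ) :
    (∑ i : Fin n, if h : (i:ℕ)+1 < n then F (y i) (y ⟨(i:ℕ)+1, h⟩) else 0)
      = ∑ k ∈ range (n-1), F (g0 n y k) (g0 n y (k+1)) := by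
  have h1 : (∑ i : Fin n, if h : (i:ℕ)+1 < n then F (y i) (y ⟨(i:ℕ)+1, h⟩) else 0)
      = ∑ i : Fin n, (if (i:ℕ)+1 < n then F (g0 n y i) (g0 n y ((i:ℕ)+1)) else 0) := by
    apply Finset.sum_congr rfl
    intro i _
    by_cases h : (i:ℕ)+1 < n
    · simp only [dif_pos h, if_pos h, g0, dif_pos i.isLt, dif_pos h]
    · simp [h]
  rw [h1, Fin.sum_univ_eq_sum_range (fun k => if k+1 < n then F (g0 n y k) (g0 n y (k+1)) else 0),
    range_adj_sum]

lemma Dsum_eq (n : ℕ) (y : Fin n → ℝ) :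
    Dsum n y = ∑ k ∈ range (n-1), (g0 n y k - g0 n y (k+1))^2 :=
  fin_adj_sum n y (fun a b => (a-b)^2)

lemma triA_row (n : ℕ) (y : Fin n → ℝ) (i : Fin n) :
    (∑ j, triA n i j * y j)
      = (if (i:ℕ) = 0 ∨ (i:ℕ) = n-1 then 1 else 2) * y i
        + (if h : (i:ℕ)+1 < n then -(y ⟨(i:ℕ)+1, h⟩) else 0)
        + (if h : 0 < (i:ℕ) then -(y ⟨(i:ℕ)-1, by omega⟩) else 0) := by
  have key : ∀ j : Fin n, triA n i j * y j
      = (if j = i then (if (i:ℕ) = 0 ∨ (i:ℕ) = n-1 then 1 else 2) * y j else 0)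
        + (if (j:ℕ) = (i:ℕ)+1 then -(y j) else 0)
        + (if (j:ℕ)+1 = (i:ℕ) then -(y j) else 0) := by
    intro j
    simp only [triA, Matrix.of_apply]
    have hij : i = j ↔ (i:ℕ) = (j:ℕ) := Fin.ext_iff
    have hji : j = i ↔ (j:ℕ) = (i:ℕ) := Fin.ext_iff
    split_ifs with h1 h2 h3 h4 h5 h6 h7 h8 h9 h10 <;>
      first
      | ring
      | (exfalso; omega)
      | (rw [hij] at * ; omega)
      | (rw [hji] at *; omega)
      | skip
    all_goals (exfalso; rw [hij] at h1; rw [hji] at *; omega)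
  rw [Finset.sum_congr rfl (fun j _ => key j)]
  rw [Finset.sum_add_distrib, Finset.sum_add_distrib]
  congr 1
  · congr 1
    · rw [Finset.sum_ite_eq' Finset.univ i]
      simp
    · by_cases h : (i:ℕ)+1 < n
      · rw [dif_pos h]
        have : ∀ j : Fin n, ((j:ℕ) = (i:ℕ)+1) ↔ j = (⟨(i:ℕ)+1, h⟩ : Fin n) := by
          intro j; rw [Fin.ext_iff]
        simp_rw [this]
        rw [Finset.sum_ite_eq' Finset.univ]
        simp
      · rw [dif_neg h]
        apply Finset.sum_eq_zero
        intro j _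
        rw [if_neg (by omega)]
  · by_cases h : 0 < (i:ℕ)
    · rw [dif_pos h]
      have : ∀ j : Fin n, ((j:ℕ)+1 = (i:ℕ)) ↔ j = (⟨(i:ℕ)-1, by omega⟩ : Fin n) := by
        intro j; rw [Fin.ext_iff]; simp; omega
      simp_rw [this]
      rw [Finset.sum_ite_eq' Finset.univ]
      simp
    · rw [dif_neg h]
      apply Finset.sum_eq_zero
      intro j _
      rw [if_neg (by omega)]

lemma triA_quad (n : ℕ) (hn : 2 ≤ n) (y : Fin n → ℝ) :
    y ⬝ᵥ (triA n *ᵥ y) = Dsum n y := by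
  set g := g0 n y with hg
  have hyg : ∀ i : Fin n, y i = g i := fun i => by simp [hg, g0, i.isLt]
  have expand : y ⬝ᵥ (triA n *ᵥ y)
      = (∑ i : Fin n, (if (i:ℕ) = 0 ∨ (i:ℕ) = n-1 then 1 else 2) * (y i)^2)
        - (∑ i : Fin n, if h : (i:ℕ)+1 < n then y i * y ⟨(i:ℕ)+1, h⟩ else 0)
        - (∑ i : Fin n, if h : 0 < (i:ℕ) then y i * y ⟨(i:ℕ)-1, by omega⟩ else 0) := by
    rw [dotProduct, ← Finset.sum_sub_distrib, ← Finset.sum_sub_distrib]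
    apply Finset.sum_congr rfl
    intro i _
    rw [Matrix.mulVec, dotProduct]
    rw [show (∑ j, triA n i j * y j) = _ from triA_row n y i]
    by_cases h1 : (i:ℕ)+1 < n <;> by_cases h2 : 0 < (i:ℕ) <;>
      simp only [dif_pos, dif_neg, h1, h2, dite_true, dite_false] <;> ring
  rw [expand]
  -- convert each to range sums
  have T2 : (∑ i : Fin n, if h : (i:ℕ)+1 < n then y i * y ⟨(i:ℕ)+1, h⟩ else 0)
      = ∑ k ∈ range (n-1), g k * g (k+1) := fin_adj_sum n y (fun a b => a * b)
  have T3 : (∑ i : Fin n, if h : 0 < (i:ℕ) then y i * y ⟨(i:ℕ)-1, by omega⟩ else 0)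
      = ∑ k ∈ range (n-1), g (k+1) * g k := by
    have h1 : (∑ i : Fin n, if h : 0 < (i:ℕ) then y i * y ⟨(i:ℕ)-1, by omega⟩ else 0)
        = ∑ i : Fin n, (if 0 < (i:ℕ) then g i * g ((i:ℕ)-1) else 0) := by
      apply Finset.sum_congr rfl
      intro i _
      by_cases h : 0 < (i:ℕ)
      · rw [dif_pos h, if_pos h, hyg]
        congr 1
        simp only [hg, g0]
        rw [dif_pos (by omega : (i:ℕ)-1 < n)]
      · simp [h]
    rw [h1, Fin.sum_univ_eq_sum_range (fun k => if 0 < k then g k * g (k-1) else 0)]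
    rw [show n = (n-1)+1 by omega, Finset.sum_range_succ' (fun k => if 0 < k then g k * g (k-1) else 0)]
    simp
  have T1 : (∑ i : Fin n, (if (i:ℕ) = 0 ∨ (i:ℕ) = n-1 then 1 else 2) * (y i)^2)
      = 2 * (∑ k ∈ range n, (g k)^2) - (g 0)^2 - (g (n-1))^2 := by
    have h0 : (∑ i : Fin n, (if (i:ℕ) = 0 ∨ (i:ℕ) = n-1 then 1 else 2) * (y i)^2)
        = ∑ i : Fin n, (if (i:ℕ) = 0 ∨ (i:ℕ) = n-1 then 1 else 2) * (g (i:ℕ))^2 :=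
      Finset.sum_congr rfl fun i _ => by rw [hyg]
    rw [h0, Fin.sum_univ_eq_sum_range (fun k => (if k = 0 ∨ k = n-1 then 1 else 2) * (g k)^2)]
    have h2 : ∀ k ∈ range n, (if k = 0 ∨ k = n-1 then 1 else 2) * (g k)^2
        = 2 * (g k)^2 - (if k = 0 then (g k)^2 else 0) - (if k = n-1 then (g k)^2 else 0) := by
      intro k _
      split_ifs with h1 h2 h3 h4 h5 <;> first | (exfalso; omega) | ring
    rw [Finset.sum_congr rfl h2, Finset.sum_sub_distrib, Finset.sum_sub_distrib,
      Finset.sum_ite_eq' (range n) 0 (fun k => (g k)^2),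
      Finset.sum_ite_eq' (range n) (n-1) (fun k => (g k)^2),
      if_pos (Finset.mem_range.2 (by omega)), if_pos (Finset.mem_range.2 (by omega)),
      Finset.mul_sum]
  rw [T1, T2, T3, Dsum_eq]
  have E1 : ∑ k ∈ range (n-1), (g k - g (k+1))^2
      = (∑ k ∈ range (n-1), (g k)^2) + (∑ k ∈ range (n-1), (g (k+1))^2)
        - 2 * ∑ k ∈ range (n-1), g k * g (k+1) := by
    rw [Finset.mul_sum, ← Finset.sum_add_distrib, ← Finset.sum_sub_distrib]
    apply Finset.sum_congr rfl
    intro k _; ring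
  have E2 : (∑ k ∈ range (n-1), (g k)^2) = (∑ k ∈ range n, (g k)^2) - (g (n-1))^2 := by
    rw [show n = (n-1)+1 by omega, Finset.sum_range_succ]
    simp
  have E3 : (∑ k ∈ range (n-1), (g (k+1))^2) = (∑ k ∈ range n, (g k)^2) - (g 0)^2 := by
    rw [show n = (n-1)+1 by omega, Finset.sum_range_succ' (fun k => (g k)^2),
      Nat.add_sub_cancel]
    ring
  have comm : ∑ k ∈ range (n-1), g (k+1) * g k = ∑ k ∈ range (n-1), g k * g (k+1) := by
    apply Finset.sum_congr rfl; intro k _; ring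
  rw [E1, E2, E3, comm]
  ring

noncomputable def Mn (n : ℕ) : Matrix (Fin n) (Fin n) ℝ := ((n:ℝ)^2)⁻¹ • 1 + triA n

lemma Mn_quad (n : ℕ) (hn : 2 ≤ n) (y : Fin n → ℝ) :
    y ⬝ᵥ (Mn n *ᵥ y) = ((n:ℝ)^2)⁻¹ * (∑ i, (y i)^2) + Dsum n y := by
  rw [Mn, Matrix.add_mulVec, dotProduct_add, Matrix.smul_mulVec,
    Matrix.one_mulVec, dotProduct_smul, triA_quad n hn]
  congr 1
  rw [smul_eq_mul, dotProduct]
  congr 1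
  exact Finset.sum_congr rfl fun i _ => by ring

lemma Mn_symm (n : ℕ) : (Mn n)ᵀ = Mn n := by
  ext i j
  simp only [Mn, Matrix.transpose_apply, Matrix.add_apply, Matrix.smul_apply, Matrix.one_apply,
    triA, Matrix.of_apply, Fin.ext_iff, smul_eq_mul]
  split_ifs <;> first | rfl | omega

lemma Mn_dot_symm (n : ℕ) (x y : Fin n → ℝ) :
    x ⬝ᵥ (Mn n *ᵥ y) = y ⬝ᵥ (Mn n *ᵥ x) := by
  rw [Matrix.dotProduct_mulVec]
  conv_lhs => rw [← Mn_symm n]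
  rw [Matrix.vecMul_transpose, dotProduct_comm]

lemma Mn_rev (n : ℕ) (i j : Fin n) : Mn n (Fin.rev i) (Fin.rev j) = Mn n i j := by
  simp only [Mn, Matrix.add_apply, Matrix.smul_apply, Matrix.one_apply, triA, Matrix.of_apply,
    Fin.ext_iff, Fin.val_rev, smul_eq_mul]
  have hi := i.isLt
  have hj := j.isLt
  split_ifs <;> first | rfl | omega

lemma Mn_mulVec_rev (n : ℕ) (v : Fin n → ℝ) :
    (Mn n *ᵥ fun i => v (Fin.rev i)) = fun i => (Mn n *ᵥ v) (Fin.rev i) := by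
  funext i
  rw [Matrix.mulVec, dotProduct, Matrix.mulVec, dotProduct]
  rw [← Equiv.sum_comp (Fin.revPerm) (fun j => Mn n (Fin.rev i) j * v j)]
  apply Finset.sum_congr rfl
  intro j _
  simp only [Fin.revPerm_apply]
  congr 1
  exact (Mn_rev n i j).symm

lemma Dsum_nonneg (n : ℕ) (y : Fin n → ℝ) : 0 ≤ Dsum n y := by
  apply Finset.sum_nonneg
  intro i _
  by_cases h : (i:ℕ)+1 < n
  · rw [dif_pos h]; positivity
  · rw [dif_neg h]

lemma Mn_posdef (n : ℕ) (hn : 2 ≤ n) : (Mn n).PosDef := by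
  refine Matrix.PosDef.of_dotProduct_mulVec_pos ?_ ?_
  · rw [Matrix.IsHermitian]
    ext i j
    rw [Matrix.conjTranspose_apply, star_trivial]
    exact congrFun (congrFun (Mn_symm n) i) j
  · intro x hx
    have hstar : star x = x := by funext i; simp
    rw [hstar, Mn_quad n hn]
    have h1 : 0 < ∑ i, (x i)^2 := by
      obtain ⟨i, hi⟩ := Function.ne_iff.1 hx
      apply Finset.sum_pos' (fun i _ => sq_nonneg _) ⟨i, Finset.mem_univ i, pow_pos (abs_pos.2 hi) 2 |>.trans_le (by rw [sq_abs])⟩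
    have h2 : (0:ℝ) < ((n:ℝ)^2)⁻¹ := by
      have hn0 : (0:ℝ) < (n:ℝ) := by exact_mod_cast Nat.lt_of_lt_of_le (by norm_num) hn
      positivity
    nlinarith [Dsum_nonneg n x]

lemma diff_sq_le (n : ℕ) (hn : 2 ≤ n) (y : Fin n → ℝ) (i j : Fin n) :
    (y i - y j)^2 ≤ n * Dsum n y := by
  -- reduce to ℕ indices a ≤ b
  set g := g0 n y with hg
  have hyg : ∀ i : Fin n, y i = g i := fun i => by simp [hg, g0, i.isLt]
  have key : ∀ a b : ℕ, a ≤ b → b < n → (g a - g b)^2 ≤ n * Dsum n y := by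
    intro a b hab hbn
    have tel : g a - g b = ∑ k ∈ Finset.Ico a b, (g k - g (k+1)) := by
      rw [Finset.sum_Ico_eq_sub _ hab, Finset.sum_range_sub' g, Finset.sum_range_sub' g]
      ring
    rw [tel]
    calc (∑ k ∈ Finset.Ico a b, (g k - g (k+1)))^2
        ≤ (Finset.Ico a b).card * ∑ k ∈ Finset.Ico a b, (g k - g (k+1))^2 :=
          sq_sum_le_card_mul_sum_sq
      _ ≤ n * Dsum n y := by
          rw [Dsum_eq]
          apply mul_le_mul
          · rw [Nat.card_Ico]; exact_mod_cast Nat.le_trans (Nat.sub_le b a) (by omega)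
          · apply Finset.sum_le_sum_of_subset_of_nonneg
            · intro k hk
              simp only [Finset.mem_Ico, Finset.mem_range] at *
              omega
            · intro k _ _; positivity
          · positivity
          · positivity
  rcases le_or_gt (i:ℕ) (j:ℕ) with h | h
  · rw [hyg, hyg]; exact key i j h j.isLt
  · rw [hyg, hyg, show (g i - g j)^2 = (g j - g i)^2 by ring]
    exact key j i (le_of_lt h) i.isLt

lemma const_quad (n : ℕ) (hn : 2 ≤ n) :
    (fun _ : Fin n => (1:ℝ)) ⬝ᵥ (Mn n *ᵥ fun _ => (1:ℝ)) = ((n:ℝ)^2)⁻¹ * n := by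
  rw [Mn_quad n hn]
  have h1 : Dsum n (fun _ => (1:ℝ)) = 0 := by
    apply Finset.sum_eq_zero
    intro i _
    by_cases h : (i:ℕ)+1 < n <;> simp [h]
  have h2 : (∑ _i : Fin n, (1:ℝ)^2) = n := by simp
  rw [h1, h2, add_zero]

section Main
variable (n : ℕ)

lemma Bmat_eq : Bmat n (((n : ℝ)^2)⁻¹) = (Mn n)⁻¹ := rfl

lemma hn2 (hn : 10 ≤ n) : 2 ≤ n := by omega

lemma ten_pos (hn : 10 ≤ n) : 0 < n := by omega

lemma ten_sub_lt (hn : 10 ≤ n) : n - 1 < n := by omega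

lemma Mn_det_isUnit (hn : 10 ≤ n) : IsUnit (Mn n).det :=
  ((Mn_posdef n (hn2 n hn)).det_pos).ne'.isUnit

lemma quad_nonneg (hn : 10 ≤ n) (y : Fin n → ℝ) : 0 ≤ y ⬝ᵥ (Mn n *ᵥ y) := by
  rw [Mn_quad n (hn2 n hn)]
  have h1 : (0:ℝ) ≤ ((n:ℝ)^2)⁻¹ := by positivity
  have h2 : (0:ℝ) ≤ ∑ i, (y i)^2 := Finset.sum_nonneg fun i _ => sq_nonneg _
  nlinarith [Dsum_nonneg n y]

lemma quad_expand (a b : Fin n → ℝ) (s t : ℝ) :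
    (s • a + t • b) ⬝ᵥ (Mn n *ᵥ (s • a + t • b))
      = s^2 * (a ⬝ᵥ (Mn n *ᵥ a)) + 2*s*t*(a ⬝ᵥ (Mn n *ᵥ b)) + t^2 * (b ⬝ᵥ (Mn n *ᵥ b)) := by
  rw [Matrix.mulVec_add, Matrix.mulVec_smul, Matrix.mulVec_smul,
    dotProduct_add, add_dotProduct, add_dotProduct,
    smul_dotProduct, smul_dotProduct, smul_dotProduct,
    smul_dotProduct, dotProduct_smul, dotProduct_smul,
    dotProduct_smul, dotProduct_smul]
  rw [Mn_dot_symm n b a]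
  simp only [smul_eq_mul]
  ring

set_option maxHeartbeats 2000000 in
lemma col_bounds (hn : 10 ≤ n) :
    (n:ℝ) ≤ (Mn n)⁻¹ ⟨0, ten_pos n hn⟩ ⟨0, ten_pos n hn⟩ ∧
    (Mn n)⁻¹ ⟨0, ten_pos n hn⟩ ⟨0, ten_pos n hn⟩ ≤ 2*(n:ℝ) ∧
    (n:ℝ)/2 ≤ (Mn n)⁻¹ ⟨n-1, ten_sub_lt n hn⟩ ⟨0, ten_pos n hn⟩ ∧
    (Mn n)⁻¹ ⟨n-1, ten_sub_lt n hn⟩ ⟨0, ten_pos n hn⟩ ≤ 3*(n:ℝ) := by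
  have h2n : 2 ≤ n := by omega
  have hnR : (10:ℝ) ≤ (n:ℝ) := by exact_mod_cast hn
  have hnpos : (0:ℝ) < n := by linarith
  set z0 : Fin n := ⟨0, by omega⟩ with hz0
  set zl : Fin n := ⟨n-1, by omega⟩ with hzl
  set B := (Mn n)⁻¹ with hB
  set v := B *ᵥ Pi.single z0 1 with hv
  have hMB : Mn n * B = 1 := Matrix.mul_nonsing_inv _ (Mn_det_isUnit n hn)
  have hMv : Mn n *ᵥ v = Pi.single z0 1 := by
    rw [hv, Matrix.mulVec_mulVec, hMB, Matrix.one_mulVec]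
  have hventry : ∀ i, v i = B i z0 := by
    intro i; rw [hv, Matrix.mulVec_single]; simp
  have hQv : v ⬝ᵥ (Mn n *ᵥ v) = v z0 := by
    rw [hMv, dotProduct_single, mul_one]
  have hvne : v ≠ 0 := by
    intro h
    rw [h, Matrix.mulVec_zero] at hMv
    have h1 := congrFun hMv z0
    simp [Pi.single_apply] at h1
  have hv0pos : 0 < v z0 := by
    have h1 := (Mn_posdef n h2n).dotProduct_mulVec_pos hvne
    have h2 : star v = v := funext fun i => rfl
    rw [h2, hQv] at h1
    exact h1
  -- lower bound on v z0
  have hlow : (n:ℝ) ≤ v z0 := by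
    set u := fun _ : Fin n => (1:ℝ) with hu
    have hQu : u ⬝ᵥ (Mn n *ᵥ u) = ((n:ℝ)^2)⁻¹ * n := const_quad n h2n
    have huv : u ⬝ᵥ (Mn n *ᵥ v) = 1 := by rw [hMv, dotProduct_single, mul_one]
    have hnn := quad_nonneg n hn ((1:ℝ) • u + (-(v z0)⁻¹) • v)
    rw [quad_expand n u v 1 (-(v z0)⁻¹), hQu, huv, hQv] at hnn
    have h1 : (-(v z0)⁻¹)^2 * v z0 = (v z0)⁻¹ := by
      rw [neg_pow]
      field_simp
    rw [h1] at hnn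
    -- hnn : 0 ≤ 1^2 * ((n²)⁻¹ * n) + 2*1*(-(v z0)⁻¹)*1 + (v z0)⁻¹
    have hinv : (v z0)⁻¹ ≤ (n:ℝ)⁻¹ := by
      have h2 : ((n:ℝ)^2)⁻¹ * n = (n:ℝ)⁻¹ := by
        field_simp
      nlinarith [hnn]
    have e1 : (v z0)⁻¹ * v z0 = 1 := inv_mul_cancel₀ hv0pos.ne'
    have e2 : (n:ℝ)⁻¹ * (n:ℝ) = 1 := inv_mul_cancel₀ hnpos.ne'
    nlinarith [mul_le_mul_of_nonneg_right hinv (le_of_lt hv0pos), mul_le_mul_of_nonneg_right hinv hnpos.le]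
  -- quadratic form decomposition
  set S := ∑ i, (v i)^2 with hS
  set D := Dsum n v with hD
  have hSnn : 0 ≤ S := Finset.sum_nonneg fun i _ => sq_nonneg _
  have hDnn : 0 ≤ D := Dsum_nonneg n v
  have hquad : ((n:ℝ)^2)⁻¹ * S + D = v z0 := by rw [← Mn_quad n h2n, hQv]
  have hinv2 : (n:ℝ)^2 * ((n:ℝ)^2)⁻¹ = 1 := mul_inv_cancel₀ (by positivity)
  have hptwise : ∀ (a : Fin n), ∀ j : Fin n, (v a)^2 ≤ 2*(v j)^2 + 2*(n:ℝ)*D := by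
    intro a j
    have h := diff_sq_le n h2n v a j
    nlinarith [sq_nonneg (v j - (v a - v j))]
  have hsumbound : ∀ a : Fin n, (n:ℝ) * (v a)^2 ≤ 2*S + 2*(n:ℝ)^2*D := by
    intro a
    have h1 := Finset.sum_le_sum (fun j (_ : j ∈ Finset.univ) => hptwise a j)
    rw [Finset.sum_const, Finset.card_univ, Fintype.card_fin, nsmul_eq_mul] at h1
    rw [Finset.sum_add_distrib, Finset.sum_const, Finset.card_univ, Fintype.card_fin,
      nsmul_eq_mul] at h1
    have h2 : (∑ j : Fin n, 2*(v j)^2) = 2*S := by rw [hS, Finset.mul_sum]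
    rw [h2] at h1
    nlinarith [h1]
  have hup : v z0 ≤ 2*(n:ℝ) := by
    have h1 := hsumbound z0
    -- n v0² ≤ 2S + 2n²D = 2n²(αS + D) = 2n² v0
    have h2 : 2*S + 2*(n:ℝ)^2*D = 2*(n:ℝ)^2 * (((n:ℝ)^2)⁻¹ * S + D) := by
      linear_combination (-2*S) * hinv2
    rw [h2, hquad] at h1
    nlinarith [hv0pos, hnpos, mul_pos hnpos hv0pos]
  have hSb : S ≤ 2*(n:ℝ)^3 := by
    have h1 : ((n:ℝ)^2)⁻¹ * S ≤ 2*(n:ℝ) := by linarith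
    calc S = (n:ℝ)^2 * (((n:ℝ)^2)⁻¹ * S) := by rw [← mul_assoc, hinv2, one_mul]
      _ ≤ (n:ℝ)^2 * (2*(n:ℝ)) :=
          mul_le_mul_of_nonneg_left h1 (by positivity)
      _ = 2*(n:ℝ)^3 := by ring
  have hDb : D ≤ 2*(n:ℝ) := by
    have h1 : 0 ≤ ((n:ℝ)^2)⁻¹ * S := mul_nonneg (by positivity) hSnn
    linarith
  -- upper bound for v zl
  have hlup : v zl ≤ 3*(n:ℝ) := by
    have h1 := hsumbound zl
    have h2 : (v zl)^2 ≤ 8*(n:ℝ)^2 := by nlinarith [hSb, hDb, hnpos]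
    nlinarith [hnpos, sq_nonneg (v zl - 3*(n:ℝ)), sq_nonneg (v zl + 3*(n:ℝ))]
  -- lower bound for v zl
  have hrev0 : Fin.rev z0 = zl := by
    apply Fin.ext
    simp only [Fin.val_rev, hz0, hzl]
    all_goals omega
  have hrevl : Fin.rev zl = z0 := by
    apply Fin.ext
    simp only [Fin.val_rev, hz0, hzl]
    all_goals omega
  set w : Fin n → ℝ := fun i => v (Fin.rev i) with hw
  have hMw : Mn n *ᵥ w = Pi.single zl 1 := by
    rw [hw, Mn_mulVec_rev n v, hMv]
    funext i
    simp only [Pi.single_apply]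
    have : (Fin.rev i = z0) ↔ (i = zl) := by
      rw [Fin.ext_iff, Fin.ext_iff, Fin.val_rev]
      have := i.isLt
      simp [hz0, hzl]
      omega
    split_ifs with h1 h2 h3 <;> first | rfl | (exfalso; rw [this] at *; omega) |
      (exfalso; exact h2 (this.1 h1)) | (exfalso; exact h1 (this.2 h3))
  set d : Fin n → ℝ := v - w with hd
  have hMd : Mn n *ᵥ d = Pi.single z0 1 - Pi.single zl 1 := by
    rw [hd, Matrix.mulVec_sub, hMv, hMw]
  have hdz : d z0 = v z0 - v zl ∧ d zl = v zl - v z0 := by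
    constructor
    · show v z0 - w z0 = v z0 - v zl
      rw [hw]; simp only []
      rw [hrev0]
    · show v zl - w zl = v zl - v z0
      rw [hw]; simp only []
      rw [hrevl]
  have hQd : d ⬝ᵥ (Mn n *ᵥ d) = 2*(v z0 - v zl) := by
    rw [hMd, dotProduct_sub, dotProduct_single, dotProduct_single,
      mul_one, mul_one, hdz.1, hdz.2]
    ring
  have hDd : (d z0 - d zl)^2 ≤ (n:ℝ) * Dsum n d := diff_sq_le n h2n d z0 zl
  have hQdD : Dsum n d ≤ d ⬝ᵥ (Mn n *ᵥ d) := by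
    rw [Mn_quad n h2n]
    have : (0:ℝ) ≤ ((n:ℝ)^2)⁻¹ * ∑ i, (d i)^2 := by positivity
    linarith
  have hllow : (n:ℝ)/2 ≤ v zl := by
    rw [hdz.1, hdz.2] at hDd
    -- (2(v0 - vl))² ≤ n * Dsum d ≤ n * Qd = 2n(v0-vl)
    have h1 : (2*(v z0 - v zl))^2 ≤ (n:ℝ) * (2*(v z0 - v zl)) := by
      calc (2*(v z0 - v zl))^2 = (v z0 - v zl - (v zl - v z0))^2 := by ring
        _ ≤ (n:ℝ) * Dsum n d := hDd
        _ ≤ (n:ℝ) * (d ⬝ᵥ (Mn n *ᵥ d)) := by nlinarith [hQdD, hnpos]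
        _ = (n:ℝ) * (2*(v z0 - v zl)) := by rw [hQd]
    by_contra hc
    push_neg at hc
    have ht : (n:ℝ)/2 < v z0 - v zl := by linarith [hlow]
    nlinarith [ht, hnpos]
  refine ⟨?_, ?_, ?_, ?_⟩
  · rw [← hventry z0]; exact hlow
  · rw [← hventry z0]; exact hup
  · rw [← hventry zl]; exact hllow
  · rw [← hventry zl]; exact hlup

end Main

lemma wcol_rev (n : ℕ) (hn : 10 ≤ n) :
    (Mn n)⁻¹ *ᵥ Pi.single (⟨n-1, ten_sub_lt n hn⟩ : Fin n) 1
      = fun i => ((Mn n)⁻¹ *ᵥ Pi.single (⟨0, ten_pos n hn⟩ : Fin n) 1) (Fin.rev i) := by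
  set z0 : Fin n := ⟨0, by omega⟩ with hz0
  set zl : Fin n := ⟨n-1, by omega⟩ with hzl
  set B := (Mn n)⁻¹ with hB
  set v := B *ᵥ Pi.single z0 1 with hv
  have hMB : Mn n * B = 1 := Matrix.mul_nonsing_inv _ (Mn_det_isUnit n hn)
  have hBM : B * Mn n = 1 := Matrix.nonsing_inv_mul _ (Mn_det_isUnit n hn)
  have hMv : Mn n *ᵥ v = Pi.single z0 1 := by
    rw [hv, Matrix.mulVec_mulVec, hMB, Matrix.one_mulVec]
  set w : Fin n → ℝ := fun i => v (Fin.rev i) with hw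
  have hMw : Mn n *ᵥ w = Pi.single zl 1 := by
    rw [hw, Mn_mulVec_rev n v, hMv]
    funext i
    simp only [Pi.single_apply]
    have hiff : (Fin.rev i = z0) ↔ (i = zl) := by
      rw [Fin.ext_iff, Fin.ext_iff, Fin.val_rev]
      have := i.isLt
      simp [hz0, hzl]
      omega
    split_ifs with h1 h2 h3 <;> first | rfl | (exfalso; exact h2 (hiff.1 h1)) |
      (exfalso; exact h1 (hiff.2 h3))
  calc B *ᵥ Pi.single zl 1 = B *ᵥ (Mn n *ᵥ w) := by rw [hMw]
    _ = (B * Mn n) *ᵥ w := by rw [Matrix.mulVec_mulVec]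
    _ = w := by rw [hBM, Matrix.one_mulVec]


set_option maxHeartbeats 3000000 in
/-- the supremum of `h(x,z;·)` over `ℝⁿ` is attained and equals
`C((a₁/2)x² - (1/2)a₂ x z + (a₁/8)z²)` where `a₁ = B₁₁/n`, `a₂ = Bₙ₁/n`;
moreover `0.1 ≤ a₁ ≤ 20` and `0.1 ≤ a₂ ≤ 20`. -/
theorem stmt_6 (n : ℕ) (hn : 10 ≤ n) (C : ℝ) (hC : 0 < C)
    (a1 a2 : ℝ)
    (ha1 : a1 = Bmat n (((n : ℝ) ^ 2)⁻¹) ⟨0, by omega⟩ ⟨0, by omega⟩ / n)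
    (ha2 : a2 = Bmat n (((n : ℝ) ^ 2)⁻¹) ⟨n - 1, by omega⟩ ⟨0, by omega⟩ / n) :
    (∀ x z : ℝ, ∃ ystar : Fin n → ℝ,
      (∀ y : Fin n → ℝ, hfun n (by omega) C x z y ≤ hfun n (by omega) C x z ystar) ∧
      hfun n (by omega) C x z ystar =
        C * ((a1 / 2) * x ^ 2 - (1 / 2) * a2 * x * z + (a1 / 8) * z ^ 2)) ∧
    (0.1 : ℝ) ≤ a1 ∧ a1 ≤ 20 ∧ (0.1 : ℝ) ≤ a2 ∧ a2 ≤ 20 := by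
  have h2n : 2 ≤ n := by omega
  have hnR : (10:ℝ) ≤ (n:ℝ) := by exact_mod_cast hn
  have hnpos : (0:ℝ) < n := by linarith
  obtain ⟨hb1, hb2, hb3, hb4⟩ := col_bounds n hn
  have hBmat : Bmat n (((n : ℝ) ^ 2)⁻¹) = (Mn n)⁻¹ := rfl
  rw [hBmat] at ha1 ha2
  constructor
  · intro x z
    set z0 : Fin n := ⟨0, by omega⟩ with hz0
    set zl : Fin n := ⟨n-1, by omega⟩ with hzl
    set B := (Mn n)⁻¹ with hB
    set c : ℝ := Real.sqrt (C/n) with hc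
    set b : Fin n → ℝ := c • (x • (Pi.single z0 1 : Fin n → ℝ) - ((1/2)*z) • (Pi.single zl 1 : Fin n → ℝ)) with hbdef
    have hb_dot : ∀ y : Fin n → ℝ, b ⬝ᵥ y = c * (x * y z0 - (1/2)*z*(y zl)) := by
      intro y
      rw [hbdef, smul_dotProduct, sub_dotProduct, smul_dotProduct,
        smul_dotProduct, single_dotProduct, single_dotProduct]
      simp only [smul_eq_mul]
      ring
    set ystar := B *ᵥ b with hystar
    have hMB : Mn n * B = 1 := Matrix.mul_nonsing_inv _ (Mn_det_isUnit n hn)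
    have hMy : Mn n *ᵥ ystar = b := by
      rw [hystar, Matrix.mulVec_mulVec, hMB, Matrix.one_mulVec]
    have hfun_eq : ∀ y : Fin n → ℝ, hfun n (by omega) C x z y
        = -(1/2) * (y ⬝ᵥ (Mn n *ᵥ y)) + b ⬝ᵥ y := by
      intro y
      rw [hfun, Mn_quad n h2n, hb_dot,
        show (∑ i : Fin n, if h : (i:ℕ)+1 < n then (y i - y ⟨(i:ℕ)+1, h⟩)^2 else 0)
          = Dsum n y from rfl]
      have e0 : y ⟨0, by omega⟩ = y z0 := rfl
      have el : y ⟨n-1, by omega⟩ = y zl := rfl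
      rw [e0, el, hc]
      have hn2ne : (n:ℝ)^2 ≠ 0 := by positivity
      field_simp
      ring
    refine ⟨ystar, ?_, ?_⟩
    · intro y
      have hy := quad_nonneg n hn ((1:ℝ) • y + (-1:ℝ) • ystar)
      rw [quad_expand n y ystar 1 (-1)] at hy
      have h1 : y ⬝ᵥ (Mn n *ᵥ ystar) = b ⬝ᵥ y := by rw [hMy, dotProduct_comm]
      have h2 : ystar ⬝ᵥ (Mn n *ᵥ ystar) = b ⬝ᵥ ystar := by rw [hMy, dotProduct_comm]
      rw [h1, h2] at hy
      rw [hfun_eq y, hfun_eq ystar]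
      have h3 : ystar ⬝ᵥ (Mn n *ᵥ ystar) = b ⬝ᵥ ystar := h2
      nlinarith [hy, h3]
    · have h2 : ystar ⬝ᵥ (Mn n *ᵥ ystar) = b ⬝ᵥ ystar := by
        rw [hMy, dotProduct_comm]
      rw [hfun_eq ystar, h2]
      -- compute b ⬝ᵥ ystar
      set v := B *ᵥ Pi.single z0 1 with hv
      set wv := B *ᵥ Pi.single zl 1 with hwv
      have hwrev : wv = fun i => v (Fin.rev i) := wcol_rev n hn
      have hystar2 : ystar = c • (x • v - ((1/2)*z) • wv) := by
        rw [hystar, hbdef, Matrix.mulVec_smul, Matrix.mulVec_sub, Matrix.mulVec_smul,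
          Matrix.mulVec_smul]
      have hrev0 : Fin.rev z0 = zl := by
        apply Fin.ext
        simp only [Fin.val_rev, hz0, hzl]
        all_goals omega
      have hrevl : Fin.rev zl = z0 := by
        apply Fin.ext
        simp only [Fin.val_rev, hz0, hzl]
        all_goals omega
      have hv_entry : ∀ i, v i = B i z0 := by
        intro i; rw [hv, Matrix.mulVec_single]; simp
      have hwv0 : wv z0 = B zl z0 := by rw [hwrev]; show v (Fin.rev z0) = _; rw [hrev0, hv_entry]
      have hwvl : wv zl = B z0 z0 := by rw [hwrev]; show v (Fin.rev zl) = _; rw [hrevl, hv_entry]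
      have hbys : b ⬝ᵥ ystar = c^2 * (x^2 * B z0 z0 - x*z*(B zl z0) + (1/4)*z^2*(B z0 z0)) := by
        rw [hystar2, hb_dot]
        have e1 : (c • (x • v - ((1/2)*z) • wv)) z0 = c * (x * v z0 - (1/2)*z*(wv z0)) := by
          simp [smul_eq_mul]; try ring
        have e2 : (c • (x • v - ((1/2)*z) • wv)) zl = c * (x * v zl - (1/2)*z*(wv zl)) := by
          simp [smul_eq_mul]; try ring
        rw [e1, e2, hwv0, hwvl, hv_entry z0, hv_entry zl]
        ring
      have hc2 : c^2 = C/n := by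
        rw [hc, sq, Real.mul_self_sqrt (by positivity)]
      rw [hbys, hc2]
      have hB00 : B z0 z0 = a1 * n := by rw [ha1]; field_simp
      have hBl0 : B zl z0 = a2 * n := by rw [ha2]; field_simp
      rw [hB00, hBl0]
      field_simp
      ring
  · refine ⟨?_, ?_, ?_, ?_⟩
    · rw [ha1, le_div_iff₀ hnpos]; linarith
    · rw [ha1, div_le_iff₀ hnpos]; linarith
    · rw [ha2, le_div_iff₀ hnpos]; linarith
    · rw [ha2, div_le_iff₀ hnpos]; linarith
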